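/- For a bounded operator T on a complex Hilbert space and any 0 ≤ α ≤ 1, the mixed Cauchy–Schwarz inequality |⟨Tx, y⟩|² ≤ ⟨|T|^{2α} x, x⟩ ⟨|T*|^{2(1−α)} y, y⟩ holds for all x, y ∈ H. -/

import Mathlib

open scoped InnerProductSpace NNReal

/-- The modulus `|T| = (T*T)^{1/2}` of a bounded operator. -/
noncomputable def oabs {H : Type*} [NormedAddCommGroup H] [InnerProductSpace ℂ H]
    [CompleteSpace H] (T : H →L[ℂ] H) : H →L[ℂ] H := CFC.sqrt (star T * T)

section KatoAux

variable {H : Type*} [NormedAddCommGroup H] [InnerProductSpace ℂ H] [CompleteSpace H]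

private lemma kato_intertwine_pow (S a b : H →L[ℂ] H) (h : S * a = b * S) (n : ℕ) :
    S * a ^ n = b ^ n * S := by
  induction n with
  | zero => simp
  | succ n ih =>
    calc S * a ^ (n + 1) = b ^ n * (S * a) := by rw [pow_succ, ← mul_assoc, ih, mul_assoc]
    _ = b ^ (n + 1) * S := by rw [h, ← mul_assoc, ← pow_succ]

private lemma kato_intertwine_aeval (S a b : H →L[ℂ] H) (h : S * a = b * S) (p : Polynomial ℝ) :
    S * (Polynomial.aeval a p) = (Polynomial.aeval b p) * S := by
  induction p using Polynomial.induction_on' with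
  | add p q hp hq => simp only [map_add, mul_add, add_mul, hp, hq]
  | monomial n r =>
    simp only [Polynomial.aeval_monomial]
    calc S * (algebraMap ℝ (H →L[ℂ] H) r * a ^ n)
        = algebraMap ℝ (H →L[ℂ] H) r * (S * a ^ n) := by
          rw [← mul_assoc, ← Algebra.commutes, mul_assoc]
      _ = algebraMap ℝ (H →L[ℂ] H) r * (b ^ n * S) := by rw [kato_intertwine_pow S a b h n]
      _ = (algebraMap ℝ (H →L[ℂ] H) r * b ^ n) * S := by rw [mul_assoc]

private lemma kato_intertwine_cfc_real (S a b : H →L[ℂ] H) (h : S * a = b * S)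
    (ha : IsSelfAdjoint a) (hb : IsSelfAdjoint b) (f : ℝ → ℝ) (hf : Continuous f) :
    S * cfc f a = cfc f b * S := by
  set M : ℝ := max (‖a‖ * ‖(1 : H →L[ℂ] H)‖) (‖b‖ * ‖(1 : H →L[ℂ] H)‖) with hM
  set K : Set ℝ := Set.Icc (-M) M with hK
  have hKa : spectrum ℝ a ⊆ K := by
    intro z hz
    have h1 : |z| ≤ M := le_trans (spectrum.norm_le_norm_mul_of_mem hz) (le_max_left _ _)
    exact Set.mem_Icc.mpr (abs_le.mp h1)
  have hKb : spectrum ℝ b ⊆ K := by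
    intro z hz
    have h1 : |z| ≤ M := le_trans (spectrum.norm_le_norm_mul_of_mem hz) (le_max_right _ _)
    exact Set.mem_Icc.mpr (abs_le.mp h1)
  rw [← sub_eq_zero, ← norm_eq_zero]
  refine le_antisymm (le_of_forall_pos_le_add fun ε hε => ?_) (norm_nonneg _)
  rw [zero_add]
  set δ : ℝ := ε / (2 * (‖S‖ + 1)) with hδdef
  have hS1 : (0:ℝ) < ‖S‖ + 1 := by positivity
  have hδ : 0 < δ := by positivity
  obtain ⟨g, hg⟩ := ContinuousMap.exists_mem_subalgebra_near_continuous_of_separatesPoints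
    (polynomialFunctions K) (polynomialFunctions_separatesPoints K)
    (fun z : K => f z) (hf.comp continuous_subtype_val) δ hδ
  obtain ⟨p, -, hp⟩ := g.2
  have hgp : ∀ z : K, (g : K → ℝ) z = p.eval (z : ℝ) := by
    intro z
    rw [← hp]
    rfl
  have key : ∀ (c : H →L[ℂ] H), IsSelfAdjoint c → spectrum ℝ c ⊆ K →
      ‖cfc f c - Polynomial.aeval c p‖ ≤ δ := by
    intro c hc hKc
    rw [← cfc_polynomial p c hc, ← cfc_sub (fun z => f z) (fun z => p.eval z) c
      (hf.continuousOn) (Polynomial.continuous_aeval p).continuousOn]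
    refine norm_cfc_le hδ.le fun z hz => ?_
    have := hg ⟨z, hKc hz⟩
    rw [hgp ⟨z, hKc hz⟩] at this
    rw [Real.norm_eq_abs] at this ⊢
    rw [abs_sub_comm] at this
    exact this.le
  have hfa := key a ha hKa
  have hfb := key b hb hKb
  have hsplit : S * cfc f a - cfc f b * S
      = S * (cfc f a - Polynomial.aeval a p) - (cfc f b - Polynomial.aeval b p) * S := by
    rw [mul_sub, sub_mul, kato_intertwine_aeval S a b h p]
    abel
  calc ‖S * cfc f a - cfc f b * S‖
      ≤ ‖S * (cfc f a - Polynomial.aeval a p)‖ + ‖(cfc f b - Polynomial.aeval b p) * S‖ := by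
        rw [hsplit]; exact norm_sub_le _ _
    _ ≤ ‖S‖ * δ + δ * ‖S‖ := by
        gcongr
        · exact (norm_mul_le _ _).trans (by gcongr)
        · exact (norm_mul_le _ _).trans (by gcongr)
    _ = δ * (2 * ‖S‖) := by ring
    _ ≤ δ * (2 * (‖S‖ + 1)) := by gcongr; linarith
    _ = ε := by rw [hδdef]; field_simp

private lemma kato_intertwine_cfc_nnreal (S a b : H →L[ℂ] H) (h : S * a = b * S)
    (ha : (0 : H →L[ℂ] H) ≤ a) (hb : (0 : H →L[ℂ] H) ≤ b)
    (f : ℝ≥0 → ℝ≥0) (hf : Continuous f) :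
    S * cfc f a = cfc f b * S := by
  rw [cfc_nnreal_eq_real f a ha, cfc_nnreal_eq_real f b hb]
  exact kato_intertwine_cfc_real S a b h (.of_nonneg ha) (.of_nonneg hb) _
    (NNReal.continuous_coe.comp (hf.comp continuous_real_toNNReal))

private lemma kato_inner_re_mono {A B : H →L[ℂ] H} (hAB : A ≤ B) (z : H) :
    (⟪A z, z⟫_ℂ).re ≤ (⟪B z, z⟫_ℂ).re := by
  have h1 := ((ContinuousLinearMap.le_def A B).mp hAB).re_inner_nonneg_left z
  simp only [ContinuousLinearMap.sub_apply, inner_sub_left, map_sub, RCLike.re_to_complex] at h1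
  linarith

private lemma kato_re_inner_nonneg (A : H →L[ℂ] H) (hA : (0 : H →L[ℂ] H) ≤ A) (z : H) :
    0 ≤ (⟪A z, z⟫_ℂ).re := by
  have h1 := ((ContinuousLinearMap.nonneg_iff_isPositive A).mp hA).re_inner_nonneg_left z
  simpa [RCLike.re_to_complex] using h1

private lemma kato_re_inner_mul_self (u : H →L[ℂ] H) (hu : IsSelfAdjoint u) (z : H) :
    (⟪(u * u) z, z⟫_ℂ).re = ‖u z‖ ^ 2 := by
  have hu' : ContinuousLinearMap.adjoint u = u := by
    rw [← ContinuousLinearMap.star_eq_adjoint, hu.star_eq]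
  rw [ContinuousLinearMap.mul_apply]
  have h2 : ⟪u (u z), z⟫_ℂ = ⟪u z, u z⟫_ℂ := by
    rw [← ContinuousLinearMap.adjoint_inner_right u (u z) z, hu']
  rw [h2, ← inner_self_eq_norm_sq (𝕜 := ℂ), RCLike.re_to_complex]

private lemma kato_selfadjoint_move (v : H →L[ℂ] H) (hv : IsSelfAdjoint v) (z w : H) :
    ⟪v z, w⟫_ℂ = ⟪z, v w⟫_ℂ := by
  have hv' : ContinuousLinearMap.adjoint v = v := by
    rw [← ContinuousLinearMap.star_eq_adjoint, hv.star_eq]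
  exact (ContinuousLinearMap.adjoint_inner_right v z w).symm.trans (by rw [hv'])

private lemma kato_alg_inner (r : ℝ≥0) (x : H) :
    (⟪(algebraMap ℝ≥0 (H →L[ℂ] H) r) x, x⟫_ℂ).re = (r : ℝ) * ‖x‖ ^ 2 := by
  rw [Algebra.algebraMap_eq_smul_one, ContinuousLinearMap.smul_apply,
    ContinuousLinearMap.one_apply, NNReal.smul_def,
    RCLike.real_smul_eq_coe_smul (K := ℂ), inner_smul_left]
  simp [← inner_self_eq_norm_sq (𝕜 := ℂ), RCLike.re_to_complex]

private lemma katoA (a : H →L[ℂ] H) (ha : (0 : H →L[ℂ] H) ≤ a) (α : ℝ)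
    (hα0 : 0 ≤ α) (hα1 : α ≤ 1) (ε : ℝ≥0) :
    CFC.rpow (cfc (fun t : ℝ≥0 => t + ε) a) α
      ≤ CFC.rpow a α + algebraMap ℝ≥0 (H →L[ℂ] H) (ε ^ α) := by
  have hcont : Continuous (fun t : ℝ≥0 => t ^ α) := NNReal.continuous_rpow_const hα0
  have hshift : Continuous (fun t : ℝ≥0 => t + ε) := continuous_id.add continuous_const
  have h1 : CFC.rpow (cfc (fun t : ℝ≥0 => t + ε) a) α
      = cfc (fun t : ℝ≥0 => (t + ε) ^ α) a := by
    show cfc (fun t : ℝ≥0 => t ^ α) (cfc (fun t : ℝ≥0 => t + ε) a) = _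
    rw [← cfc_comp (fun t : ℝ≥0 => t ^ α) (fun t : ℝ≥0 => t + ε) a ha
      hcont.continuousOn hshift.continuousOn]
    rfl
  have h2 : CFC.rpow a α + algebraMap ℝ≥0 (H →L[ℂ] H) (ε ^ α)
      = cfc (fun t : ℝ≥0 => t ^ α + ε ^ α) a := by
    rw [show CFC.rpow a α = cfc (fun t : ℝ≥0 => t ^ α) a from rfl,
      ← cfc_const (ε ^ α) a ha,
      ← cfc_add a (fun t : ℝ≥0 => t ^ α) (fun _ => ε ^ α) hcont.continuousOn continuousOn_const]
  rw [h1, h2]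
  refine (cfc_nnreal_le_iff _ _ a (SpectrumRestricts.nnreal_of_nonneg ha)
    ((hcont.comp hshift).continuousOn) (hcont.continuousOn.add continuousOn_const) ha).mpr ?_
  exact fun t _ => NNReal.rpow_add_le_add_rpow t ε hα0 hα1

private lemma katoB (T : H →L[ℂ] H) (α : ℝ) (hα0 : 0 ≤ α) (hα1 : α ≤ 1)
    (ε : ℝ≥0) (hε : 0 < ε) :
    T * CFC.rpow (cfc (fun t : ℝ≥0 => t + ε) (star T * T)) (-α) * star T
      ≤ CFC.rpow (T * star T) (1 - α) := by
  set a : H →L[ℂ] H := star T * T with ha_def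
  set b : H →L[ℂ] H := T * star T with hb_def
  have ha : (0 : H →L[ℂ] H) ≤ a := star_mul_self_nonneg T
  have hb : (0 : H →L[ℂ] H) ≤ b := mul_star_self_nonneg T
  have hcomm : T * a = b * T := (mul_assoc T (star T) T).symm
  have hshift : Continuous (fun t : ℝ≥0 => t + ε) := continuous_id.add continuous_const
  have hne : ∀ t : ℝ≥0, t + ε ≠ 0 := fun t h => hε.ne' (by simpa using (add_eq_zero.mp h).2)
  have hfc : Continuous (fun t : ℝ≥0 => (t + ε) ^ (-α)) := by
    have hco : ContinuousOn (fun t : ℝ≥0 => t ^ (-α)) {(0 : ℝ≥0)}ᶜ :=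
      NNReal.continuousOn_rpow_const (Or.inl (by simp))
    exact hco.comp_continuous hshift fun t => by simp [hne t]
  have h1 : CFC.rpow (cfc (fun t : ℝ≥0 => t + ε) a) (-α)
      = cfc (fun t : ℝ≥0 => (t + ε) ^ (-α)) a := by
    show cfc (fun t : ℝ≥0 => t ^ (-α)) (cfc (fun t : ℝ≥0 => t + ε) a) = _
    rw [← cfc_comp (fun t : ℝ≥0 => t ^ (-α)) (fun t : ℝ≥0 => t + ε) a ha
      (NNReal.continuousOn_rpow_const (Or.inl (by rintro ⟨t, -, ht⟩; exact hne t ht)))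
      hshift.continuousOn]
    rfl
  have h2 : T * cfc (fun t : ℝ≥0 => (t + ε) ^ (-α)) a
      = cfc (fun t : ℝ≥0 => (t + ε) ^ (-α)) b * T :=
    kato_intertwine_cfc_nnreal T a b hcomm ha hb _ hfc
  rw [h1]
  have h3 : T * cfc (fun t : ℝ≥0 => (t + ε) ^ (-α)) a * star T
      = cfc (fun t : ℝ≥0 => (t + ε) ^ (-α) * id t) b := by
    rw [h2, mul_assoc, ← hb_def, cfc_mul _ _ b hfc.continuousOn continuousOn_id, cfc_id ℝ≥0 b hb]
  rw [h3]
  have h4 : CFC.rpow b (1 - α) = cfc (fun t : ℝ≥0 => t ^ (1 - α)) b := rfl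
  rw [h4]
  refine (cfc_nnreal_le_iff _ _ b (SpectrumRestricts.nnreal_of_nonneg hb)
    ((hfc.mul continuous_id).continuousOn)
    (NNReal.continuous_rpow_const (by linarith)).continuousOn hb).mpr ?_
  intro t _
  rcases eq_or_ne t 0 with rfl | ht
  · simp
  · have key : t ≤ (t + ε) ^ α * t ^ (1 - α) := by
      calc t = t ^ α * t ^ (1 - α) := by rw [← NNReal.rpow_add ht]; norm_num
        _ ≤ (t + ε) ^ α * t ^ (1 - α) :=
            mul_le_mul_left (NNReal.rpow_le_rpow le_self_add hα0) _
    have hpos : 0 < (t + ε) ^ α := NNReal.rpow_pos (lt_of_lt_of_le hε le_add_self)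
    show (t + ε) ^ (-α) * id t ≤ t ^ (1 - α)
    rw [id, NNReal.rpow_neg, inv_mul_le_iff₀ hpos]
    exact key

private lemma kato_eps (T : H →L[ℂ] H) (α : ℝ) (hα0 : 0 ≤ α) (hα1 : α ≤ 1) (x y : H)
    (ε : ℝ≥0) (hε : 0 < ε) :
    ‖⟪T x, y⟫_ℂ‖ ^ 2 ≤
      ((⟪(CFC.rpow (star T * T) α) x, x⟫_ℂ).re + (ε : ℝ) ^ α * ‖x‖ ^ 2) *
        (⟪(CFC.rpow (T * star T) (1 - α)) y, y⟫_ℂ).re := by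
  set a : H →L[ℂ] H := star T * T with ha_def
  set b : H →L[ℂ] H := T * star T with hb_def
  have ha : (0 : H →L[ℂ] H) ≤ a := star_mul_self_nonneg T
  have hb : (0 : H →L[ℂ] H) ≤ b := mul_star_self_nonneg T
  set c : H →L[ℂ] H := cfc (fun t : ℝ≥0 => t + ε) a with hc_def
  have hshift : Continuous (fun t : ℝ≥0 => t + ε) := continuous_id.add continuous_const
  have hc : (0 : H →L[ℂ] H) ≤ c := cfc_nonneg_of_predicate
  have hc0 : (0 : ℝ≥0) ∉ spectrum ℝ≥0 c := by
    rw [hc_def, cfc_map_spectrum (fun t : ℝ≥0 => t + ε) a ha hshift.continuousOn]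
    rintro ⟨t, -, ht⟩
    exact hε.ne' (by simpa using (add_eq_zero.mp ht).2)
  set u : H →L[ℂ] H := CFC.rpow c (α / 2) with hu_def
  set v : H →L[ℂ] H := CFC.rpow c (-(α / 2)) with hv_def
  have hu : (0 : H →L[ℂ] H) ≤ u := CFC.rpow_nonneg
  have hv : (0 : H →L[ℂ] H) ≤ v := CFC.rpow_nonneg
  have huSA : IsSelfAdjoint u := .of_nonneg hu
  have hvSA : IsSelfAdjoint v := .of_nonneg hv
  have hvu : v * u = 1 := CFC.rpow_neg_mul_rpow (α / 2) (((spectrum.zero_notMem_iff ℝ≥0).mp hc0).isStrictlyPositive hc)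
  have huu : u * u = CFC.rpow c α := by
    have h := CFC.rpow_add (a := c) (x := α / 2) (y := α / 2) ((spectrum.zero_notMem_iff ℝ≥0).mp hc0)
    rw [show α / 2 + α / 2 = α by ring] at h
    exact h.symm
  have hvv : v * v = CFC.rpow c (-α) := by
    have h := CFC.rpow_add (a := c) (x := -(α / 2)) (y := -(α / 2)) ((spectrum.zero_notMem_iff ℝ≥0).mp hc0)
    rw [show -(α / 2) + -(α / 2) = -α by ring] at h
    exact h.symm
  set w : H := (star T) y with hw_def
  have hTxy : ⟪T x, y⟫_ℂ = ⟪u x, v w⟫_ℂ := by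
    have e1 : ⟪T x, y⟫_ℂ = ⟪x, w⟫_ℂ := by
      rw [hw_def, ContinuousLinearMap.star_eq_adjoint, ContinuousLinearMap.adjoint_inner_right]
    have e2 : v (u x) = x := by
      rw [← ContinuousLinearMap.mul_apply, hvu, ContinuousLinearMap.one_apply]
    rw [e1]
    conv_lhs => rw [← e2]
    exact kato_selfadjoint_move v hvSA (u x) w
  have hCS : ‖⟪T x, y⟫_ℂ‖ ^ 2 ≤ ‖u x‖ ^ 2 * ‖v w‖ ^ 2 := by
    rw [hTxy, ← mul_pow]
    exact pow_le_pow_left₀ (norm_nonneg _) (norm_inner_le_norm (𝕜 := ℂ) (u x) (v w)) 2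
  have h1 : ‖u x‖ ^ 2 = (⟪(CFC.rpow c α) x, x⟫_ℂ).re := by
    rw [← kato_re_inner_mul_self u huSA x, huu]
  have h2 : ‖v w‖ ^ 2 = (⟪(T * CFC.rpow c (-α) * star T) y, y⟫_ℂ).re := by
    rw [← kato_re_inner_mul_self v hvSA w, hvv]
    congr 1
    have e3 : (T * CFC.rpow c (-α) * star T) y = T ((CFC.rpow c (-α)) w) := by
      simp [ContinuousLinearMap.mul_apply, hw_def]
    rw [e3, hw_def, ContinuousLinearMap.star_eq_adjoint,
      ContinuousLinearMap.adjoint_inner_right]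
  have h3 : (⟪(CFC.rpow c α) x, x⟫_ℂ).re
      ≤ (⟪(CFC.rpow a α) x, x⟫_ℂ).re + (ε : ℝ) ^ α * ‖x‖ ^ 2 := by
    have hA := katoA a ha α hα0 hα1 ε
    have hmono := kato_inner_re_mono hA x
    rwa [ContinuousLinearMap.add_apply, inner_add_left, Complex.add_re,
      kato_alg_inner (ε ^ α) x, NNReal.coe_rpow] at hmono
  have h4 : (⟪(T * CFC.rpow c (-α) * star T) y, y⟫_ℂ).re
      ≤ (⟪(CFC.rpow b (1 - α)) y, y⟫_ℂ).re :=
    kato_inner_re_mono (katoB T α hα0 hα1 ε hε) y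
  calc ‖⟪T x, y⟫_ℂ‖ ^ 2 ≤ ‖u x‖ ^ 2 * ‖v w‖ ^ 2 := hCS
    _ ≤ ((⟪(CFC.rpow a α) x, x⟫_ℂ).re + (ε : ℝ) ^ α * ‖x‖ ^ 2) *
        (⟪(CFC.rpow b (1 - α)) y, y⟫_ℂ).re := by
        rw [h1, h2]
        have hnn : 0 ≤ (⟪(T * CFC.rpow c (-α) * star T) y, y⟫_ℂ).re := by
          rw [← h2]; positivity
        have hnn2 : 0 ≤ (⟪(CFC.rpow a α) x, x⟫_ℂ).re + (ε : ℝ) ^ α * ‖x‖ ^ 2 := by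
          have := kato_re_inner_nonneg (CFC.rpow a α) CFC.rpow_nonneg x
          positivity
        exact mul_le_mul h3 h4 hnn hnn2

end KatoAux

/-- Kato's mixed Cauchy–Schwarz inequality:
`|⟨Tx, y⟩|² ≤ ⟨|T|^{2α} x, x⟩ ⟨|T*|^{2(1−α)} y, y⟩` for `0 ≤ α ≤ 1`. -/
theorem stmt_3 {H : Type*} [NormedAddCommGroup H] [InnerProductSpace ℂ H] [CompleteSpace H]
    (T : H →L[ℂ] H) (α : ℝ) (hα : α ∈ Set.Icc (0 : ℝ) 1) (x y : H) :
    ‖⟪T x, y⟫_ℂ‖ ^ 2 ≤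
      (⟪(CFC.rpow (oabs T) (2 * α)) x, x⟫_ℂ).re *
        (⟪(CFC.rpow (oabs (star T)) (2 * (1 - α))) y, y⟫_ℂ).re := by
  obtain ⟨hα0, hα1⟩ := hα
  have ha : (0 : H →L[ℂ] H) ≤ star T * T := star_mul_self_nonneg T
  have hb : (0 : H →L[ℂ] H) ≤ T * star T := mul_star_self_nonneg T
  have hred1 : CFC.rpow (oabs T) (2 * α) = CFC.rpow (star T * T) α := by
    rw [oabs, CFC.sqrt_eq_rpow]
    rw [show CFC.rpow ((star T * T) ^ (1 / 2 : ℝ)) (2 * α)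
        = ((star T * T) ^ (1 / 2 : ℝ)) ^ (2 * α) from rfl]
    rw [CFC.rpow_rpow_of_exponent_nonneg _ _ _ (by norm_num) (by linarith) ha,
      show (1 / 2 : ℝ) * (2 * α) = α by ring]
    rfl
  have hred2 : CFC.rpow (oabs (star T)) (2 * (1 - α)) = CFC.rpow (T * star T) (1 - α) := by
    rw [oabs, star_star, CFC.sqrt_eq_rpow]
    rw [show CFC.rpow ((T * star T) ^ (1 / 2 : ℝ)) (2 * (1 - α))
        = ((T * star T) ^ (1 / 2 : ℝ)) ^ (2 * (1 - α)) from rfl]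
    rw [CFC.rpow_rpow_of_exponent_nonneg _ _ _ (by norm_num) (by linarith) hb,
      show (1 / 2 : ℝ) * (2 * (1 - α)) = 1 - α by ring]
    rfl
  rw [hred1, hred2]
  rcases eq_or_lt_of_le hα0 with hzero | hαpos
  · have z1 : CFC.rpow (star T * T) (0 : ℝ) = 1 := CFC.rpow_zero _ ha
    have z2 : CFC.rpow (T * star T) (1 : ℝ) = T * star T := CFC.rpow_one _ hb
    rw [← hzero, z1, show (1 : ℝ) - 0 = 1 by norm_num, z2, ContinuousLinearMap.one_apply]
    have e3 : (⟪(T * star T) y, y⟫_ℂ).re = ‖(star T) y‖ ^ 2 := by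
      rw [ContinuousLinearMap.mul_apply, ContinuousLinearMap.star_eq_adjoint,
        ← ContinuousLinearMap.adjoint_inner_right, ← inner_self_eq_norm_sq (𝕜 := ℂ),
        RCLike.re_to_complex]
    have e4 : ⟪T x, y⟫_ℂ = ⟪x, (star T) y⟫_ℂ := by
      rw [ContinuousLinearMap.star_eq_adjoint, ContinuousLinearMap.adjoint_inner_right]
    have e5 : (⟪x, x⟫_ℂ).re = ‖x‖ ^ 2 := by
      rw [← inner_self_eq_norm_sq (𝕜 := ℂ), RCLike.re_to_complex]
    rw [e3, e4, e5]
    calc ‖⟪x, (star T) y⟫_ℂ‖ ^ 2 ≤ (‖x‖ * ‖(star T) y‖) ^ 2 :=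
          pow_le_pow_left₀ (norm_nonneg _) (norm_inner_le_norm _ _) 2
      _ = ‖x‖ ^ 2 * ‖(star T) y‖ ^ 2 := mul_pow _ _ 2
  · set P : ℝ := (⟪(CFC.rpow (star T * T) α) x, x⟫_ℂ).re with hP
    set Q : ℝ := (⟪(CFC.rpow (T * star T) (1 - α)) y, y⟫_ℂ).re with hQ
    have hlim : Filter.Tendsto (fun ε : ℝ => (P + ε ^ α * ‖x‖ ^ 2) * Q)
        (nhdsWithin 0 (Set.Ioi 0)) (nhds (P * Q)) := by
      have hc1 : ContinuousAt (fun ε : ℝ => (P + ε ^ α * ‖x‖ ^ 2) * Q) 0 := by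
        have h0 : ContinuousAt (fun ε : ℝ => ε ^ α) 0 :=
          Real.continuousAt_rpow_const 0 α (Or.inr hαpos.le)
        exact ((continuousAt_const.add (h0.mul continuousAt_const)).mul continuousAt_const)
      have hcw : Filter.Tendsto (fun ε : ℝ => (P + ε ^ α * ‖x‖ ^ 2) * Q)
          (nhdsWithin 0 (Set.Ioi 0)) (nhds ((P + (0 : ℝ) ^ α * ‖x‖ ^ 2) * Q)) :=
        hc1.continuousWithinAt
      simpa [Real.zero_rpow (ne_of_gt hαpos)] using hcw
    refine ge_of_tendsto hlim ?_
    filter_upwards [self_mem_nhdsWithin] with ε hε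
    have hε' : (0 : ℝ) < ε := Set.mem_Ioi.mp hε
    have hkey := kato_eps T α hα0 hα1 x y ε.toNNReal (Real.toNNReal_pos.mpr hε')
    rwa [Real.coe_toNNReal ε hε'.le] at hkey
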